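/- arXiv:1103.2568 — 2 statements merged into one kernel-verified Lean document; each statement's English description precedes it below -/
import Mathlib

section
/- With g_κ(X,Y) = g₀(X + κ(X)^#, Y + κ(Y)^#) as above, where κ is 𝔱-valued and T-horizontal for an isometric torus action, the Riemannian volume densities agree: dvol_{g_κ} = dvol_{g₀}. -/
open Polynomial Module

lemma det_one_add_of_isNilpotent {V : Type*} [AddCommGroup V] [Module ℝ V]
    [FiniteDimensional ℝ V] (N : Module.End ℝ V) (hN : IsNilpotent N) :
    LinearMap.det (1 + N) = 1 := by
  classical
  set n := Module.finrank ℝ V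
  let b := Module.finBasis ℝ V
  set C := LinearMap.toMatrix b b N with hC
  have hchar : Matrix.charpoly C = X ^ n := by
    rw [LinearMap.charpoly_toMatrix, hN.charpoly_eq_X_pow_finrank]
  have heval : (Matrix.charpoly C).eval (-1 : ℝ) = (-1 : ℝ) ^ n := by
    rw [hchar, eval_pow, eval_X]
  have hmap : (Matrix.charmatrix C).map (Polynomial.eval (-1 : ℝ)) = -(1 + C) := by
    ext i j
    rcases eq_or_ne i j with rfl | h
    · simp [Matrix.charmatrix_apply_eq, Matrix.one_apply_eq]; ring
    · simp [Matrix.charmatrix_apply_ne _ _ _ h, Matrix.one_apply_ne h]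
  have heval2 : (Matrix.charpoly C).eval (-1 : ℝ) = (-1 : ℝ) ^ n * (1 + C).det := by
    rw [Matrix.charpoly, ← Polynomial.coe_evalRingHom, RingHom.map_det]
    rw [show (Polynomial.evalRingHom (-1:ℝ)).mapMatrix C.charmatrix
        = C.charmatrix.map (Polynomial.eval (-1:ℝ)) from rfl, hmap, Matrix.det_neg]
    simp [n]
  have hdet : (1 + C).det = 1 := by
    have hne : ((-1 : ℝ) ^ n) ≠ 0 := by
      simp [pow_ne_zero]
    rw [heval] at heval2
    exact (mul_left_cancel₀ hne (by rw [← heval2, mul_one])).symm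
  calc LinearMap.det (1 + N) = ((1 : Matrix (Fin n) (Fin n) ℝ) + C).det := by
        rw [← LinearMap.det_toMatrix b, map_add, LinearMap.toMatrix_one]
    _ = 1 := hdet


/-- pointwise formulation at an arbitrary point `x ∈ M`:
with `φ : 𝔱 → V` the fundamental-vector-field map and `κ : V → 𝔱` the (`T`-horizontal)
value of the 1-form at `x`, the metric `g_κ(X,Y) = g₀(X + φ(κ X), Y + φ(κ Y))` is the
pull-back of `g₀` under the linear map `A = Id + φ∘κ`.  Since `κ ∘ φ = 0`, `A` is
unipotent, `det A = 1`, and the Riemannian volume densities of `g_κ` and `g₀` agree: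
in any basis `b` the Gram determinants (hence the densities `√det(g(bᵢ,bⱼ))`) coincide. -/
theorem gKappa_volume_density_eq
    (V : Type*) [NormedAddCommGroup V] [InnerProductSpace ℝ V] [FiniteDimensional ℝ V]
    (𝔱 : Type*) [AddCommGroup 𝔱] [Module ℝ 𝔱]
    (φ : 𝔱 →ₗ[ℝ] V) (κ : V →ₗ[ℝ] 𝔱) (hhor : κ.comp φ = 0) :
    LinearMap.det (LinearMap.id + φ.comp κ) = 1 ∧
    ∀ (ι : Type) [Fintype ι] [DecidableEq ι] (b : Module.Basis ι ℝ V),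
      Real.sqrt (Matrix.det (Matrix.of fun i j =>
          (inner ℝ (b i + φ (κ (b i))) (b j + φ (κ (b j))) : ℝ)))
        = Real.sqrt (Matrix.det (Matrix.of fun i j => (inner ℝ (b i) (b j) : ℝ))) := by
  classical
  have hnil : IsNilpotent (φ.comp κ : Module.End ℝ V) := by
    refine ⟨2, ?_⟩
    rw [pow_two, Module.End.mul_eq_comp, LinearMap.comp_assoc, ← LinearMap.comp_assoc κ,
      hhor, LinearMap.zero_comp, LinearMap.comp_zero]
  have hdet : LinearMap.det (LinearMap.id + φ.comp κ : Module.End ℝ V) = 1 := by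
    have := det_one_add_of_isNilpotent (φ.comp κ) hnil
    rwa [show (1 : Module.End ℝ V) = LinearMap.id from rfl] at this
  refine ⟨hdet, ?_⟩
  intro ι _ _ b
  congr 1
  set A : Module.End ℝ V := LinearMap.id + φ.comp κ with hA
  have hAb : ∀ v : V, A v = v + φ (κ v) := fun v => rfl
  set c := LinearMap.toMatrix b b A with hc
  set G : Matrix ι ι ℝ := Matrix.of fun i j => (inner ℝ (b i) (b j) : ℝ) with hG
  have key : (Matrix.of fun i j =>
      (inner ℝ (b i + φ (κ (b i))) (b j + φ (κ (b j))) : ℝ)) = c.transpose * G * c := by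
    ext i j
    have hrepr : ∀ i, b i + φ (κ (b i)) = ∑ k, c k i • b k := by
      intro i
      rw [← hAb]
      conv_lhs => rw [← b.sum_repr (A (b i))]
      refine Finset.sum_congr rfl fun k _ => ?_
      rw [hc, LinearMap.toMatrix_apply]
    simp only [Matrix.of_apply, hrepr, sum_inner, inner_sum, real_inner_smul_left,
      real_inner_smul_right, Matrix.mul_apply, Matrix.transpose_apply, Finset.sum_mul,
      Finset.mul_sum]
    refine Finset.sum_congr rfl fun l _ => Finset.sum_congr rfl fun k _ => ?_
    simp only [hG, Matrix.of_apply]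
    rw [real_inner_comm]
    ring
  rw [key, Matrix.det_mul, Matrix.det_mul, Matrix.det_transpose,
    hc, LinearMap.det_toMatrix, hdet]
  ring
end

section
/- Call a linear map j : ℝ² → su(m) generic if no nonzero element of su(m) commutes with both j_{Z₁} and j_{Z₂}. If j is generic and A ∈ SU(m) satisfies A j_{Z_k} A^{-1} = j_{Z_k} for k = 1,2, then A is a scalar matrix, i.e., A = ζ I_m for some m-th root of unity ζ. -/
open Complex Matrix

/-- if `j : ℝ² → su(m)` is generic (no nonzero element of `su(m)` commutes
with both `j_{Z₁}` and `j_{Z₂}`) and `A ∈ SU(m)` satisfies `A j_{Z_k} A⁻¹ = j_{Z_k}` for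
`k = 1, 2`, then `A` is a scalar matrix `ζ I_m` with `ζ^m = 1`. -/
theorem generic_commutant_is_scalar (m : ℕ) (hm : 3 ≤ m)
    (j : (ℝ × ℝ) →ₗ[ℝ] Matrix (Fin m) (Fin m) ℂ)
    (hskew : ∀ Z, (j Z)ᴴ = -(j Z)) (htrace : ∀ Z, (j Z).trace = 0)
    (hgen : ∀ B : Matrix (Fin m) (Fin m) ℂ, Bᴴ = -B → B.trace = 0 →
      B * j (1, 0) = j (1, 0) * B → B * j (0, 1) = j (0, 1) * B → B = 0)
    (A : Matrix (Fin m) (Fin m) ℂ) (hA : Aᴴ * A = 1) (hdet : A.det = 1)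
    (hc₁ : A * j (1, 0) * A⁻¹ = j (1, 0)) (hc₂ : A * j (0, 1) * A⁻¹ = j (0, 1)) :
    ∃ ζ : ℂ, ζ ^ m = 1 ∧ A = ζ • (1 : Matrix (Fin m) (Fin m) ℂ) := by
  have hm0 : (m : ℂ) ≠ 0 := by
    exact_mod_cast Nat.cast_ne_zero.mpr (by omega)
  have hinv : A⁻¹ = Aᴴ := Matrix.inv_eq_left_inv hA
  have hAA : A * Aᴴ = 1 := mul_eq_one_comm.mp hA
  -- commutation of A with j
  have comm : ∀ Z, A * j Z * A⁻¹ = j Z → A * j Z = j Z * A := by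
    intro Z h
    have := congrArg (· * A) h
    simpa [hinv, Matrix.mul_assoc, hA] using this
  have comH : ∀ Z, A * j Z = j Z * A → Aᴴ * j Z = j Z * Aᴴ := by
    intro Z h
    calc Aᴴ * j Z = Aᴴ * j Z * (A * Aᴴ) := by rw [hAA, Matrix.mul_one]
    _ = Aᴴ * (j Z * A) * Aᴴ := by noncomm_ring
    _ = Aᴴ * (A * j Z) * Aᴴ := by rw [h]
    _ = j Z * Aᴴ := by rw [← Matrix.mul_assoc, hA, Matrix.one_mul]
  have h1 := comm _ hc₁
  have h2 := comm _ hc₂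
  have h1' := comH _ h1
  have h2' := comH _ h2
  set t : ℂ := A.trace with ht
  have htrH : Aᴴ.trace = star t := by simp [ht, Matrix.trace_conjTranspose]
  have htr1 : (1 : Matrix (Fin m) (Fin m) ℂ).trace = (m : ℂ) := by
    simp [Matrix.trace_one]
  -- First: A - Aᴴ is scalar
  have key1 : A - Aᴴ = ((t - star t) / m) • (1 : Matrix (Fin m) (Fin m) ℂ) := by
    have hc : star ((t - star t) / (m : ℂ)) = -((t - star t) / m) := by
      simp [star_div₀, sub_div, neg_div]
    have hz := hgen (A - Aᴴ - ((t - star t) / m) • 1)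
      (by
        have e : (A - Aᴴ - ((t - star t) / (m:ℂ)) • 1)ᴴ
            = Aᴴ - A - star ((t - star t) / (m:ℂ)) • 1 := by
          simp [conjTranspose_sub, conjTranspose_smul]
        rw [e, hc]; module)
      (by
        simp only [Matrix.trace_sub, Matrix.trace_smul, htrH, htr1, smul_eq_mul, ht]
        field_simp
        ring)
      (by simp only [Matrix.sub_mul, Matrix.mul_sub, h1, h1', smul_mul_assoc,
            mul_smul_comm, Matrix.one_mul, Matrix.mul_one])
      (by simp only [Matrix.sub_mul, Matrix.mul_sub, h2, h2', smul_mul_assoc,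
            mul_smul_comm, Matrix.one_mul, Matrix.mul_one])
    linear_combination (norm := abel) hz
  -- Second: A + Aᴴ is scalar
  have key2 : A + Aᴴ = ((t + star t) / m) • (1 : Matrix (Fin m) (Fin m) ℂ) := by
    have hcreal : star ((t + star t) / (m : ℂ)) = (t + star t) / m := by
      simp [star_div₀, add_div]; ring
    have hz := hgen (Complex.I • (A + Aᴴ - ((t + star t) / m) • 1))
      (by
        have e : (Complex.I • (A + Aᴴ - ((t + star t) / (m:ℂ)) • 1))ᴴ
            = star Complex.I • (Aᴴ + A - star ((t + star t) / (m:ℂ)) • 1) := by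
          simp [conjTranspose_sub, conjTranspose_add, conjTranspose_smul]
        rw [e, hcreal, Complex.star_def, Complex.conj_I]; module)
      (by
        simp only [Matrix.trace_smul, Matrix.trace_sub, Matrix.trace_add, htrH, htr1,
          smul_eq_mul, ht]
        field_simp
        ring)
      (by simp only [smul_mul_assoc, mul_smul_comm, Matrix.sub_mul, Matrix.mul_sub,
            Matrix.add_mul, Matrix.mul_add, h1, h1', Matrix.one_mul, Matrix.mul_one])
      (by simp only [smul_mul_assoc, mul_smul_comm, Matrix.sub_mul, Matrix.mul_sub,
            Matrix.add_mul, Matrix.mul_add, h2, h2', Matrix.one_mul, Matrix.mul_one])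
    have hI : Complex.I ≠ 0 := Complex.I_ne_zero
    have := (smul_eq_zero.mp hz).resolve_left hI
    linear_combination (norm := abel) this
  -- combine
  have hA2 : (2 : ℂ) • A = (2 : ℂ) • ((t / m) • (1 : Matrix (Fin m) (Fin m) ℂ)) := by
    have hsum : A + A = ((t - star t) / m) • (1 : Matrix (Fin m) (Fin m) ℂ)
        + ((t + star t) / m) • 1 := by
      rw [← key1, ← key2]; abel
    rw [two_smul, hsum, smul_smul, ← add_smul]
    congr 1
    field_simp
    ring
  have hAeq : A = (t / m) • (1 : Matrix (Fin m) (Fin m) ℂ) :=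
    smul_right_injective _ (two_ne_zero) hA2
  refine ⟨t / m, ?_, hAeq⟩
  have := hdet
  rw [hAeq] at this
  simpa [Matrix.det_smul, Matrix.det_one] using this
end
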